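/- If Σ_{n≥1} n^{-3/2} ‖V_n g‖ < ∞ and ‖V_n g‖ = O(n^α) for some α > 0, then ‖h_ε‖ = O(ε^{-α}) as ε → 0. -/

import Mathlib

open MeasureTheory Filter Topology

lemma key_rpow (a l t : ℝ) (ha : 0 < a) (hl : 0 < l) (ht : 0 ≤ t) :
    t ^ a * Real.exp (-(l * t)) ≤ (a / l) ^ a := by
  rcases ht.eq_or_lt with h0 | ht'
  · rw [← h0, Real.zero_rpow ha.ne', zero_mul]
    positivity
  · have h1 : Real.log (t * l / a) ≤ t * l / a - 1 :=
      Real.log_le_sub_one_of_pos (by positivity)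
    have hlog : Real.log (t * l / a) = Real.log t + Real.log l - Real.log a := by
      rw [Real.log_div (by positivity) ha.ne', Real.log_mul ht'.ne' hl.ne']
    have hlog2 : Real.log (a / l) = Real.log a - Real.log l :=
      Real.log_div ha.ne' hl.ne'
    rw [Real.rpow_def_of_pos ht', Real.rpow_def_of_pos (by positivity), ← Real.exp_add,
      Real.exp_le_exp, hlog2]
    have h2 := mul_le_mul_of_nonneg_left h1 ha.le
    rw [hlog] at h2
    have h3 : a * (t * l / a) = t * l := by field_simp
    nlinarith [h2, h3]

set_option maxHeartbeats 2000000 in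
theorem stmt2 {X : Type*} [MeasurableSpace X] (π : Measure X) [IsProbabilityMeasure π]
    (Q : Lp ℝ 2 π →L[ℝ] Lp ℝ 2 π) (hQ : ‖Q‖ ≤ 1)
    (g : Lp ℝ 2 π) (hg0 : ∫ x, g x ∂π = 0)
    (hsum : Summable fun n : ℕ =>
      (n : ℝ) ^ (-(3 : ℝ) / 2) * ‖∑ k ∈ Finset.range n, (Q ^ k) g‖)
    (α : ℝ) (hα : 0 < α)
    (hV : ∃ C : ℝ, ∀ n : ℕ, 1 ≤ n → ‖∑ k ∈ Finset.range n, (Q ^ k) g‖ ≤ C * (n : ℝ) ^ α)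
    (h : ℝ → Lp ℝ 2 π)
    (hres : ∀ ε : ℝ, 0 < ε →
      HasSum (fun n : ℕ => ((1 + ε) ^ (n + 1))⁻¹ • (Q ^ n) g) (h ε)) :
    ∃ C ε₀ : ℝ, 0 < C ∧ 0 < ε₀ ∧
      ∀ ε : ℝ, 0 < ε → ε < ε₀ → ‖h ε‖ ≤ C * ε ^ (-α) := by
  obtain ⟨C0, hC0⟩ := hV
  set C : ℝ := |C0| + 1 with hCdef
  have hCpos : (0:ℝ) < C := by positivity
  set S : ℕ → Lp ℝ 2 π := fun n => ∑ k ∈ Finset.range n, (Q ^ k) g with hSdef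
  have hSC : ∀ n : ℕ, ‖S n‖ ≤ C * (n : ℝ) ^ α := by
    intro n
    rcases Nat.eq_zero_or_pos n with rfl | hn
    · simp [hSdef, Real.zero_rpow hα.ne']
    · refine (hC0 n hn).trans ?_
      have h1 : (0:ℝ) ≤ (n:ℝ) ^ α := Real.rpow_nonneg n.cast_nonneg _
      nlinarith [le_abs_self C0]
  refine ⟨8 * C * (4*α) ^ α, 1, by positivity, one_pos, ?_⟩
  intro ε hε hε1
  have hε0 : (0:ℝ) < 1 + ε := by linarith
  have hne : (1:ℝ) + ε ≠ 0 := hε0.ne'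
  set x : ℝ := (1+ε)⁻¹ with hx
  have hx0 : 0 < x := by positivity
  have hx1 : x < 1 := by rw [hx, inv_lt_one_iff₀]; right; linarith
  set l : ℝ := (1 - x)/2 with hl
  have hl0 : 0 < l := by rw [hl]; linarith
  have hl1 : l ≤ 1 := by rw [hl]; nlinarith
  have hlε : ε / 4 ≤ l := by
    rw [hl, hx]
    have e : (1:ℝ) - (1+ε)⁻¹ = ε/(1+ε) := by field_simp; ring
    rw [e, div_div, div_le_div_iff₀ (by norm_num) (by positivity)]
    nlinarith
  set q : ℝ := Real.exp (-l) with hq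
  have hq0 : (0:ℝ) ≤ q := (Real.exp_pos _).le
  have hq1 : q < 1 := by
    rw [hq]
    exact Real.exp_lt_one_iff.mpr (by linarith)
  have hqle : q ≤ (1+l)⁻¹ := by
    rw [hq, Real.exp_neg]
    exact inv_anti₀ (by positivity) (by linarith [Real.add_one_le_exp l])
  have h1q : l/2 ≤ 1 - q := by
    have e : (1:ℝ) - (1+l)⁻¹ = l/(1+l) := by field_simp; ring
    have h2 : l/2 ≤ l/(1+l) := by
      rw [div_le_div_iff₀ (by norm_num) (by linarith)]
      nlinarith
    linarith [hqle, e.ge, e.le]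
  set K : ℝ := (α / l) ^ α with hK
  have hK0 : (0:ℝ) ≤ K := Real.rpow_nonneg (by positivity) _
  have hqn : ∀ n : ℕ, Real.exp (-(l*(n:ℝ))) = q ^ n := by
    intro n
    rw [hq, ← Real.exp_nat_mul]
    congr 1; ring
  have hxq : ∀ n : ℕ, (n:ℝ)^α * x^n ≤ K * q^n := by
    intro n
    have hxe : x ≤ Real.exp (-(2*l)) := by
      have h1 := Real.add_one_le_exp (-(2*l))
      have hx2l : x = 1 - 2*l := by rw [hl]; ring
      linarith
    have hxn : x^n ≤ Real.exp (-(l*(n:ℝ))) * Real.exp (-(l*(n:ℝ))) := by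
      calc x^n ≤ (Real.exp (-(2*l)))^n := pow_le_pow_left₀ hx0.le hxe n
        _ = Real.exp (-(l*(n:ℝ))) * Real.exp (-(l*(n:ℝ))) := by
            rw [← Real.exp_nat_mul, ← Real.exp_add]; congr 1; ring
    calc (n:ℝ)^α * x^n ≤ (n:ℝ)^α * (Real.exp (-(l*(n:ℝ))) * Real.exp (-(l*(n:ℝ)))) :=
          mul_le_mul_of_nonneg_left hxn (Real.rpow_nonneg n.cast_nonneg _)
      _ = ((n:ℝ)^α * Real.exp (-(l*(n:ℝ)))) * Real.exp (-(l*(n:ℝ))) := by ring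
      _ ≤ K * q^n := by
          rw [← hqn n]
          exact mul_le_mul_of_nonneg_right (key_rpow α l n hα hl0 n.cast_nonneg)
            (Real.exp_pos _).le
  have hxp : ∀ m : ℕ, x^m = ((1+ε)^m)⁻¹ := fun m => by rw [hx, inv_pow]
  -- Abel summation identity
  set F : ℕ → Lp ℝ 2 π := fun n => ((1 + ε) ^ (n + 1))⁻¹ • (Q ^ n) g with hF
  set T : ℕ → Lp ℝ 2 π := fun n => (((1+ε)^n)⁻¹ - ((1+ε)^(n+1))⁻¹) • S n with hT
  have habel : ∀ N, ∑ n ∈ Finset.range N, F n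
      = (∑ n ∈ Finset.range N, T n) + ((1+ε)^N)⁻¹ • S N := by
    intro N
    induction N with
    | zero => simp [hSdef]
    | succ N ih =>
        rw [Finset.sum_range_succ, ih, Finset.sum_range_succ]
        have hQg : (Q ^ N) g = S (N+1) - S N := by
          rw [hSdef]; simp [Finset.sum_range_succ]
        simp only [hF, hT]
        rw [hQg, smul_sub, sub_smul]
        abel
  have hbd : Tendsto (fun N => ((1+ε)^N)⁻¹ • S N) atTop (𝓝 0) := by
    have hb : ∀ n : ℕ, ‖((1+ε)^n)⁻¹ • S n‖ ≤ (C*K) * q^n := by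
      intro n
      rw [norm_smul, norm_inv, norm_pow, Real.norm_of_nonneg hε0.le]
      calc ((1+ε)^n)⁻¹ * ‖S n‖ ≤ ((1+ε)^n)⁻¹ * (C * (n:ℝ)^α) :=
            mul_le_mul_of_nonneg_left (hSC n) (by positivity)
        _ = C * ((n:ℝ)^α * x^n) := by rw [hxp]; ring
        _ ≤ C * (K * q^n) := mul_le_mul_of_nonneg_left (hxq n) hCpos.le
        _ = (C*K) * q^n := by ring
    refine squeeze_zero_norm hb ?_
    have := (tendsto_pow_atTop_nhds_zero_of_lt_one hq0 hq1).const_mul (C*K)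
    simpa using this
  have hTlim : Tendsto (fun N => ∑ n ∈ Finset.range N, T n) atTop (𝓝 (h ε)) := by
    have h1 := (hres ε hε).tendsto_sum_nat
    have h4 := h1.sub hbd
    rw [sub_zero] at h4
    have h3 : ∀ N, (∑ n ∈ Finset.range N, F n) - ((1+ε)^N)⁻¹ • S N
        = ∑ n ∈ Finset.range N, T n := by
      intro N; rw [habel N]; abel
    exact Filter.Tendsto.congr h3 h4
  have hTn : ∀ n, ‖T n‖ ≤ (ε * C * K) * q^n := by
    intro n
    simp only [hT]
    rw [norm_smul]
    have hceq : ((1+ε)^n)⁻¹ - ((1+ε)^(n+1))⁻¹ = ε * x^(n+1) := by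
      rw [hxp]
      field_simp
      ring
    rw [hceq, Real.norm_of_nonneg (by positivity)]
    calc ε * x^(n+1) * ‖S n‖ ≤ ε * x^(n+1) * (C * (n:ℝ)^α) :=
          mul_le_mul_of_nonneg_left (hSC n) (by positivity)
      _ ≤ ε * x^n * (C * (n:ℝ)^α) := by
          have hp : x^(n+1) ≤ x^n := by
            rw [pow_succ]
            nlinarith [pow_nonneg hx0.le n]
          have h5 : (0:ℝ) ≤ C * (n:ℝ)^α := by positivity
          nlinarith [mul_le_mul_of_nonneg_left hp (mul_nonneg hε.le h5)]
      _ = (ε * C) * ((n:ℝ)^α * x^n) := by ring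
      _ ≤ (ε * C) * (K * q^n) := mul_le_mul_of_nonneg_left (hxq n) (by positivity)
      _ = (ε * C * K) * q^n := by ring
  have hnorm : ∀ N, ‖∑ n ∈ Finset.range N, T n‖ ≤ (ε * C * K) * (1-q)⁻¹ := by
    intro N
    calc ‖∑ n ∈ Finset.range N, T n‖ ≤ ∑ n ∈ Finset.range N, ‖T n‖ :=
          norm_sum_le _ _
      _ ≤ ∑ n ∈ Finset.range N, (ε*C*K)*q^n := Finset.sum_le_sum fun n _ => hTn n
      _ = (ε*C*K) * ∑ n ∈ Finset.range N, q^n := by rw [Finset.mul_sum]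
      _ ≤ (ε*C*K) * (1-q)⁻¹ := by
          apply mul_le_mul_of_nonneg_left _ (by positivity)
          calc ∑ n ∈ Finset.range N, q^n ≤ ∑' n : ℕ, q^n :=
                Summable.sum_le_tsum _ (fun i _ => pow_nonneg hq0 i)
                  (summable_geometric_of_lt_one hq0 hq1)
            _ = (1-q)⁻¹ := tsum_geometric_of_lt_one hq0 hq1
  have hmain : ‖h ε‖ ≤ (ε * C * K) * (1-q)⁻¹ :=
    le_of_tendsto hTlim.norm (Filter.Eventually.of_forall hnorm)
  refine hmain.trans ?_
  have hKle : K ≤ (4*α)^α * ε^(-α) := by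
    have h1 : α / l ≤ 4*α/ε := by
      rw [div_le_div_iff₀ hl0 hε]
      nlinarith
    calc K ≤ (4*α/ε)^α := Real.rpow_le_rpow (by positivity) h1 hα.le
      _ = (4*α)^α * ε^(-α) := by
          rw [Real.div_rpow (by positivity) hε.le, Real.rpow_neg hε.le, div_eq_mul_inv]
  have hqinv : (1-q)⁻¹ ≤ 8/ε := by
    calc (1-q)⁻¹ ≤ (l/2)⁻¹ := inv_anti₀ (by linarith) h1q
      _ = 2/l := by rw [inv_div]
      _ ≤ 8/ε := by
          rw [div_le_div_iff₀ hl0 hε]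
          nlinarith
  have hεα : (0:ℝ) ≤ ε^(-α) := Real.rpow_nonneg hε.le _
  calc (ε * C * K) * (1-q)⁻¹ ≤ (ε * C * ((4*α)^α * ε^(-α))) * (8/ε) := by
        apply mul_le_mul (mul_le_mul_of_nonneg_left hKle (by positivity)) hqinv
          (inv_nonneg.mpr (by linarith)) (by positivity)
    _ = 8 * C * (4*α)^α * ε^(-α) := by
        field_simp
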